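/- Let n ≥ 1, let T : ℝⁿ → ℝⁿ be monotone and additively homogeneous, and suppose T(u) = λ·e + u for some λ ∈ ℝ and u ∈ ℝⁿ. Let I, J ⊆ {1,…,n} be nonempty disjoint sets and ε > 0 be such that T_i(u + ε·e_{Iᶜ}) = λ + u_i for all i ∈ I and T_j(u − ε·e_{Jᶜ}) = λ + u_j for all j ∈ J. Then there exists v ∈ ℝⁿ with T(v) = λ·e + v, u ≤ v ≤ u + ε·e, v_i = u_i for all i ∈ I, and v_j = u_j + ε for all j ∈ J; in particular v − u is not a scalar multiple of e. -/

import Mathlib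

/-- `T` is additively homogeneous: `T(x + c·e) = T(x) + c·e`. -/
def AddHomog (n : ℕ) (T : (Fin n → ℝ) → (Fin n → ℝ)) : Prop :=
  ∀ (x : Fin n → ℝ) (c : ℝ), T (fun i => x i + c) = fun i => T x i + c

/-- `Δ` is a local MIN-dominion for `T` at `u`: there is `ε > 0` with
`T_i(u + t·e_{Δᶜ}) = T_i(u)` for all `i ∈ Δ` and all `t ∈ [0, ε]`. -/
def LocalMinDominion (n : ℕ) (T : (Fin n → ℝ) → (Fin n → ℝ)) (u : Fin n → ℝ)
    (Δ : Set (Fin n)) : Prop :=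
  Δ.Nonempty ∧ ∃ ε : ℝ, 0 < ε ∧ ∀ i ∈ Δ, ∀ t : ℝ, 0 ≤ t → t ≤ ε →
    T (fun j => u j + Δᶜ.indicator (fun _ => t) j) i = T u i

/-- `Δ` is a local MAX-dominion for `T` at `u`: there is `ε > 0` with
`T_i(u − t·e_{Δᶜ}) = T_i(u)` for all `i ∈ Δ` and all `t ∈ [0, ε]`. -/
def LocalMaxDominion (n : ℕ) (T : (Fin n → ℝ) → (Fin n → ℝ)) (u : Fin n → ℝ)
    (Δ : Set (Fin n)) : Prop :=
  Δ.Nonempty ∧ ∃ ε : ℝ, 0 < ε ∧ ∀ i ∈ Δ, ∀ t : ℝ, 0 ≤ t → t ≤ ε →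
    T (fun j => u j - Δᶜ.indicator (fun _ => t) j) i = T u i

theorem stmt13 (n : ℕ) (hn : 1 ≤ n)
    (T : (Fin n → ℝ) → (Fin n → ℝ))
    (hmono : Monotone T) (hhom : AddHomog n T)
    (lam : ℝ) (u : Fin n → ℝ) (hu : T u = fun i => lam + u i)
    (I J : Set (Fin n)) (hI : I.Nonempty) (hJ : J.Nonempty) (hIJ : Disjoint I J)
    (ε : ℝ) (hε : 0 < ε)
    (hmin : ∀ i ∈ I, T (fun j => u j + Iᶜ.indicator (fun _ => ε) j) i = lam + u i)
    (hmax : ∀ j ∈ J, T (fun l => u l - Jᶜ.indicator (fun _ => ε) l) j = lam + u j) :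
    ∃ v : Fin n → ℝ, T v = (fun i => lam + v i) ∧
      u ≤ v ∧ v ≤ (fun i => u i + ε) ∧
      (∀ i ∈ I, v i = u i) ∧ (∀ j ∈ J, v j = u j + ε) ∧
      ¬ ∃ c : ℝ, v - u = fun _ => c := by
  classical
  set S : (Fin n → ℝ) → (Fin n → ℝ) := fun x i => T x i - lam with hS
  have hSmono : Monotone S := fun x z h i => by
    have := hmono h i; simp only [hS]; linarith
  -- Lipschitz / continuity of T
  have hlip : ∀ x z : Fin n → ℝ, ∀ i, T x i - T z i ≤ dist x z := by
    intro x z i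
    have h1 : x ≤ fun j => z j + dist x z := by
      intro j
      have h := dist_le_pi_dist x z j
      rw [Real.dist_eq] at h
      have := le_of_abs_le h
      dsimp; linarith
    have h2 := hmono h1 i
    rw [hhom z (dist x z)] at h2
    dsimp at h2; linarith
  have hcont : Continuous T := by
    have : LipschitzWith 1 T := by
      apply LipschitzWith.of_dist_le_mul
      intro x z
      rw [NNReal.coe_one, one_mul, dist_pi_le_iff dist_nonneg]
      intro i
      rw [Real.dist_eq, abs_sub_le_iff]
      exact ⟨hlip x z i, by simpa [dist_comm] using hlip z x i⟩
    exact this.continuous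
  have hScont : Continuous S := by
    apply continuous_pi
    intro i
    exact ((continuous_apply i).comp hcont).sub continuous_const
  -- the two endpoint vectors
  set x0 : Fin n → ℝ := fun j => u j + Iᶜ.indicator (fun _ => ε) j with hx0
  set y : Fin n → ℝ := fun l => (u l - Jᶜ.indicator (fun _ => ε) l) + ε with hy
  have hx0le : x0 ≤ fun j => u j + ε := by
    intro j
    simp only [hx0]
    gcongr
    by_cases hj : j ∈ Iᶜ <;> simp [hj, le_of_lt hε]
  have huy : u ≤ y := by
    intro l
    simp only [hy]
    by_cases hl : l ∈ Jᶜ <;> simp [hl, le_of_lt hε]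
  have hyx0 : y ≤ x0 := by
    intro l
    simp only [hy, hx0]
    by_cases hl : l ∈ J
    · have hlI : l ∈ Iᶜ := fun hlI => hIJ.ne_of_mem hlI hl rfl
      have : l ∉ Jᶜ := by simpa using hl
      simp [this, hlI]
    · have : l ∈ Jᶜ := hl
      simp [this]
      by_cases hlI : l ∈ Iᶜ <;> simp [hlI, le_of_lt hε]
  have hSx0 : S x0 ≤ x0 := by
    intro i
    by_cases hi : i ∈ I
    · have h1 := hmin i hi
      have h2 : i ∉ Iᶜ := by simpa using hi
      simp only [hS, hx0, h1, Set.indicator_of_notMem h2]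
      rw [hx0] at h1; linarith
    · have h1 : T x0 i ≤ T (fun j => u j + ε) i := hmono hx0le i
      rw [hhom u ε] at h1
      have h2 : T u i = lam + u i := congrFun hu i
      have h3 : i ∈ Iᶜ := hi
      simp only [hS, hx0, Set.indicator_of_mem h3]
      dsimp at h1 ⊢
      rw [h2] at h1
      linarith
  have hySy : y ≤ S y := by
    have hTy : T y = fun i => T (fun l => u l - Jᶜ.indicator (fun _ => ε) l) i + ε :=
      hhom (fun l => u l - Jᶜ.indicator (fun _ => ε) l) ε
    intro j
    by_cases hj : j ∈ J
    · have h1 := hmax j hj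
      have h2 : j ∉ Jᶜ := by simpa using hj
      simp only [hS, hy, hTy, h1, Set.indicator_of_notMem h2]
      have h5 := congrFun hTy j
      simp only [hy] at h5
      linarith
    · have h1 : (fun l => u l + (-ε)) ≤ fun l => u l - Jᶜ.indicator (fun _ => ε) l := by
        intro l
        dsimp
        by_cases hl : l ∈ Jᶜ <;> simp [hl, le_of_lt hε]
      have h2 := hmono h1 j
      rw [hhom u (-ε)] at h2
      have h3 : T u j = lam + u j := congrFun hu j
      have h4 : j ∈ Jᶜ := hj
      have h5 := congrFun hTy j
      simp only [hS, hy, hTy, Set.indicator_of_mem h4]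
      simp only [hy] at h5
      dsimp at h2 h5 ⊢
      rw [h3] at h2
      linarith
  -- the iteration
  set a : ℕ → Fin n → ℝ := fun k => S^[k] y with ha
  have hstep : ∀ k, a (k + 1) = S (a k) := fun k => Function.iterate_succ_apply' S k y
  have ha_le : ∀ k, a k ≤ x0 := by
    intro k
    induction k with
    | zero => exact hyx0
    | succ k ih => rw [hstep]; exact le_trans (hSmono ih) hSx0
  have ha_ge : ∀ k, y ≤ a k := by
    intro k
    induction k with
    | zero => exact le_refl y
    | succ k ih => rw [hstep]; exact le_trans hySy (hSmono ih)
  have ha_mono : Monotone a := by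
    apply monotone_nat_of_le_succ
    intro k
    rw [hstep]
    induction k with
    | zero => exact hySy
    | succ k ih => rw [hstep]; exact hSmono ih
  set v : Fin n → ℝ := fun i => ⨆ k, a k i with hv
  have hbdd : ∀ i, BddAbove (Set.range fun k => a k i) := by
    intro i
    refine ⟨x0 i, ?_⟩
    rintro _ ⟨k, rfl⟩
    exact ha_le k i
  have hvle : ∀ i, v i ≤ x0 i := fun i => ciSup_le fun k => ha_le k i
  have hvge : ∀ k i, a k i ≤ v i := fun k i => le_ciSup (hbdd i) k
  have htend : Filter.Tendsto a Filter.atTop (nhds v) := by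
    rw [tendsto_pi_nhds]
    intro i
    exact tendsto_atTop_ciSup (fun p q hpq => ha_mono hpq i) (hbdd i)
  have hfix : S v = v := by
    have h1 : Filter.Tendsto (fun k => S (a k)) Filter.atTop (nhds (S v)) :=
      (hScont.tendsto v).comp htend
    have h2 : (fun k => S (a k)) = fun k => a (k + 1) := funext fun k => (hstep k).symm
    have h3 : Filter.Tendsto (fun k => a (k + 1)) Filter.atTop (nhds v) :=
      htend.comp (Filter.tendsto_add_atTop_nat 1)
    exact tendsto_nhds_unique (h2 ▸ h1) h3
  refine ⟨v, ?_, ?_, ?_, ?_, ?_, ?_⟩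
  · funext i
    have := congrFun hfix i
    simp only [hS] at this
    linarith
  · intro i
    exact le_trans (huy i) (le_trans (ha_ge 0 i) (hvge 0 i))
  · intro i
    exact le_trans (hvle i) (hx0le i)
  · intro i hi
    have h2 : i ∉ Iᶜ := by simpa using hi
    have hub : v i ≤ u i := by
      have := hvle i
      simpa only [hx0, Set.indicator_of_notMem h2, add_zero] using this
    have hlb : u i ≤ v i := le_trans (huy i) (le_trans (ha_ge 0 i) (hvge 0 i))
    linarith
  · intro j hj
    have h2 : j ∉ Jᶜ := by simpa using hj
    have hlb : u j + ε ≤ v j := by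
      have := le_trans (ha_ge 0 j) (hvge 0 j)
      simpa only [hy, Set.indicator_of_notMem h2, sub_zero] using this
    have hub : v j ≤ u j + ε := by
      have := le_trans (hvle j) (hx0le j)
      simpa using this
    linarith
  · rintro ⟨c, hc⟩
    obtain ⟨i, hi⟩ := hI
    obtain ⟨j, hj⟩ := hJ
    have hvi : v i = u i := by
      have h2 : i ∉ Iᶜ := by simpa using hi
      have hub : v i ≤ u i := by
        have := hvle i
        simpa only [hx0, Set.indicator_of_notMem h2, add_zero] using this
      have hlb : u i ≤ v i := le_trans (huy i) (le_trans (ha_ge 0 i) (hvge 0 i))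
      linarith
    have hvj : v j = u j + ε := by
      have h2 : j ∉ Jᶜ := by simpa using hj
      have hlb : u j + ε ≤ v j := by
        have := le_trans (ha_ge 0 j) (hvge 0 j)
        simpa only [hy, Set.indicator_of_notMem h2, sub_zero] using this
      have hub : v j ≤ u j + ε := by
        have := le_trans (hvle j) (hx0le j)
        simpa using this
      linarith
    have hci := congrFun hc i
    have hcj := congrFun hc j
    simp only [Pi.sub_apply] at hci hcj
    rw [hvi] at hci
    rw [hvj] at hcj
    simp at hci
    linarith [hci ▸ hcj]
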